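/- For all integers t ≥ 3 and γ ≥ 1, the graph H^t_γ has exactly (t−1)γ + 1 vertices, its chromatic number equals t, and for every vertex v the chromatic number of H^t_γ − v equals t − 1 (i.e., H^t_γ is t-critical). -/

import Mathlib

/-- Vertex set of the graph `H^t_γ`: the `a`-vertices `a_1, …, a_{γ+1}` (0-indexed),
the `b`-vertices `b_1, …, b_γ` (0-indexed), and the `c`-vertices `c_{ℓ,k}` for
`ℓ ∈ [γ]`, `k ∈ [t-3]` (0-indexed). -/
abbrev HV (t γ : ℕ) : Type := Fin (γ + 1) ⊕ Fin γ ⊕ (Fin γ × Fin (t - 3))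

/-- The edges of the graph `H^t_γ` (as a relation, to be symmetrized):
for each block `ℓ ∈ [γ]` with vertex set `V_ℓ = {a_ℓ, a_{ℓ+1}, b_ℓ, c_{ℓ,1},…,c_{ℓ,t-3}}`,
all pairs inside `V_ℓ` are edges, except that `{a_ℓ, b_ℓ}` is a non-edge when `ℓ ≥ 2`
and `{b_ℓ, a_{ℓ+1}}` is a non-edge when `ℓ ≤ γ - 1`; additionally `{b_ℓ, b_{ℓ+1}}` is an
edge for `ℓ ∈ [γ-1]`. (Everything is 0-indexed here.) -/
def HRel (t γ : ℕ) : HV t γ → HV t γ → Prop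
  | Sum.inl i, Sum.inl j => (j : ℕ) = (i : ℕ) + 1
  | Sum.inr (Sum.inl l), Sum.inl i =>
      ((l : ℕ) = 0 ∧ (i : ℕ) = 0) ∨ ((l : ℕ) + 1 = γ ∧ (i : ℕ) = γ)
  | Sum.inr (Sum.inl l), Sum.inr (Sum.inl l') => (l' : ℕ) = (l : ℕ) + 1
  | Sum.inl i, Sum.inr (Sum.inr (l, _)) => (i : ℕ) = (l : ℕ) ∨ (i : ℕ) = (l : ℕ) + 1
  | Sum.inr (Sum.inl l), Sum.inr (Sum.inr (l', _)) => l = l'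
  | Sum.inr (Sum.inr (l, k)), Sum.inr (Sum.inr (l', k')) => l = l' ∧ k ≠ k'
  | _, _ => False

/-- The graph `H^t_γ`. -/
def Hgraph (t γ : ℕ) : SimpleGraph (HV t γ) := SimpleGraph.fromRel (HRel t γ)

namespace HProof
variable {t γ : ℕ}

lemma hadj_iff (v w : HV t γ) :
    (Hgraph t γ).Adj v w ↔ v ≠ w ∧ (HRel t γ v w ∨ HRel t γ w v) :=
  SimpleGraph.fromRel_adj _ _ _

/-! ### Adjacency facts -/

lemma adj_aa {i j : ℕ} (hi : i < γ + 1) (hj : j < γ + 1) (hij : j = i + 1) :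
    (Hgraph t γ).Adj (Sum.inl ⟨i, hi⟩) (Sum.inl ⟨j, hj⟩) := by
  rw [hadj_iff]
  exact ⟨by simp [Fin.ext_iff]; omega, Or.inl (by simp [HRel]; omega)⟩

lemma adj_ac {i l k : ℕ} (hi : i < γ + 1) (hl : l < γ) (hk : k < t - 3)
    (h : i = l ∨ i = l + 1) :
    (Hgraph t γ).Adj (Sum.inl ⟨i, hi⟩) (Sum.inr (Sum.inr (⟨l, hl⟩, ⟨k, hk⟩))) := by
  rw [hadj_iff]
  exact ⟨by simp, Or.inl (by simpa [HRel] using h)⟩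

lemma adj_cc {l k k' : ℕ} (hl : l < γ) (hk : k < t - 3) (hk' : k' < t - 3) (h : k ≠ k') :
    (Hgraph t γ).Adj (Sum.inr (Sum.inr (⟨l, hl⟩, ⟨k, hk⟩)))
      (Sum.inr (Sum.inr (⟨l, hl⟩, ⟨k', hk'⟩))) := by
  rw [hadj_iff]
  refine ⟨by simp [Prod.ext_iff, Fin.ext_iff]; omega,
    Or.inl ⟨rfl, by simp [Fin.ext_iff]; omega⟩⟩

lemma adj_bc {l k : ℕ} (hl : l < γ) (hk : k < t - 3) :
    (Hgraph t γ).Adj (Sum.inr (Sum.inl ⟨l, hl⟩)) (Sum.inr (Sum.inr (⟨l, hl⟩, ⟨k, hk⟩))) := by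
  rw [hadj_iff]
  exact ⟨by simp, Or.inl rfl⟩

lemma adj_bb {l l' : ℕ} (hl : l < γ) (hl' : l' < γ) (h : l' = l + 1) :
    (Hgraph t γ).Adj (Sum.inr (Sum.inl ⟨l, hl⟩)) (Sum.inr (Sum.inl ⟨l', hl'⟩)) := by
  rw [hadj_iff]
  exact ⟨by simp [Fin.ext_iff]; omega, Or.inl (by simp [HRel]; omega)⟩

lemma adj_ba {l i : ℕ} (hl : l < γ) (hi : i < γ + 1)
    (h : (l = 0 ∧ i = 0) ∨ (l + 1 = γ ∧ i = γ)) :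
    (Hgraph t γ).Adj (Sum.inr (Sum.inl ⟨l, hl⟩)) (Sum.inl ⟨i, hi⟩) := by
  rw [hadj_iff]
  exact ⟨by simp, Or.inl (by simpa [HRel] using h)⟩

/-! ### `H` is `t`-colorable -/

lemma coloring_of_rel {α : Type*} (g : HV t γ → α)
    (h : ∀ x y, HRel t γ x y → g x ≠ g y) :
    ∀ {x y : HV t γ}, (Hgraph t γ).Adj x y → g x ≠ g y := by
  intro x y hxy
  rw [hadj_iff] at hxy
  rcases hxy.2 with h' | h'
  · exact h _ _ h'
  · exact (h _ _ h').symm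

lemma colorable_t (ht : 3 ≤ t) : (Hgraph t γ).Colorable t := by
  refine ⟨SimpleGraph.Coloring.mk (fun v => match v with
    | Sum.inl i => (⟨(i : ℕ) % 2, by omega⟩ : Fin t)
    | Sum.inr (Sum.inl l) => if (l : ℕ) % 2 = 0 then (⟨2, by omega⟩ : Fin t) else ⟨1, by omega⟩
    | Sum.inr (Sum.inr (l, k)) => (⟨(k : ℕ) + 3, by omega⟩ : Fin t)) ?_⟩
  apply coloring_of_rel
  rintro (i | l | ⟨l, k⟩) (j | l' | ⟨l', k'⟩) h <;>
    simp only [HRel] at h <;>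
    simp only [ne_eq, Fin.mk.injEq] <;> try (split_ifs <;> simp only [Fin.mk.injEq])
  all_goals try omega

/-! ### `H` is not `(t-1)`-colorable -/

lemma not_colorable (ht : 3 ≤ t) (hγ : 1 ≤ γ) : ¬ (Hgraph t γ).Colorable (t - 1) := by
  rintro ⟨C⟩
  -- in each block, b's color equals one of the two `a` colors
  have key : ∀ l (hl : l < γ) (h2 : l + 1 < γ + 1),
      C (Sum.inr (Sum.inl ⟨l, hl⟩)) = C (Sum.inl ⟨l, by omega⟩) ∨
      C (Sum.inr (Sum.inl ⟨l, hl⟩)) = C (Sum.inl ⟨l + 1, h2⟩) := by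
    intro l hl h2
    set f : Fin (t - 1) → Fin (t - 1) := fun j =>
      if h0 : (j : ℕ) = 0 then C (Sum.inl ⟨l, by omega⟩)
      else if h1 : (j : ℕ) = 1 then C (Sum.inl ⟨l + 1, h2⟩)
      else C (Sum.inr (Sum.inr (⟨l, hl⟩, ⟨(j : ℕ) - 2, by omega⟩))) with hf
    have hinj : Function.Injective f := by
      intro x y hxy
      by_contra hne
      have hvne : (x : ℕ) ≠ (y : ℕ) := fun e => hne (Fin.ext e)
      simp only [hf] at hxy
      split_ifs at hxy with p1 p2 p3 p4 p5 p6 p7 p8 <;>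
        first
        | omega
        | exact absurd hxy (C.valid (adj_aa _ _ (by omega)))
        | exact absurd hxy.symm (C.valid (adj_aa _ _ (by omega)))
        | exact absurd hxy (C.valid (adj_ac _ _ _ (by omega)))
        | exact absurd hxy.symm (C.valid (adj_ac _ _ _ (by omega)))
        | exact absurd hxy (C.valid (adj_cc _ _ _ (by omega)))
    have hsurj := Finite.surjective_of_injective hinj
    obtain ⟨j, hj⟩ := hsurj (C (Sum.inr (Sum.inl ⟨l, hl⟩)))
    simp only [hf] at hj
    split_ifs at hj with p1 p2
    · exact Or.inl hj.symm
    · exact Or.inr hj.symm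
    · exact absurd hj.symm (C.valid (adj_bc hl (by omega)))
  have chain : ∀ l (hl : l < γ) (h2 : l + 1 < γ + 1),
      C (Sum.inr (Sum.inl ⟨l, hl⟩)) = C (Sum.inl ⟨l + 1, h2⟩) := by
    intro l
    induction l with
    | zero =>
      intro hl h2
      rcases key 0 hl h2 with h | h
      · exact absurd h (C.valid (adj_ba hl (by omega) (Or.inl ⟨rfl, rfl⟩)))
      · exact h
    | succ n ih =>
      intro hl h2
      rcases key (n + 1) hl h2 with h | h
      · exfalso
        have hb := C.valid (adj_bb (l := n) (by omega) hl rfl)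
        rw [ih (by omega) (by omega), h] at hb
        exact hb rfl
      · exact h
  have hlast := chain (γ - 1) (by omega) (by omega)
  have hadj := C.valid (adj_ba (l := γ - 1) (i := γ) (by omega) (by omega)
    (Or.inr ⟨by omega, rfl⟩))
  rw [hlast] at hadj
  have heq : (⟨γ - 1 + 1, by omega⟩ : Fin (γ + 1)) = ⟨γ, by omega⟩ := by
    simp only [Fin.mk.injEq]; omega
  rw [heq] at hadj
  exact hadj rfl

/-! ### `H - v` is `(t-1)`-colorable -/

lemma colorable_induce_of (v : HV t γ) (n : ℕ) (g : HV t γ → Fin n)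
    (h : ∀ x y, x ≠ v → y ≠ v → HRel t γ x y → g x ≠ g y) :
    ((Hgraph t γ).induce {w | w ≠ v}).Colorable n := by
  refine ⟨SimpleGraph.Coloring.mk (fun w => g w.1) ?_⟩
  rintro ⟨x, hx⟩ ⟨y, hy⟩ hadj
  have hA : (Hgraph t γ).Adj x y := hadj
  rw [hadj_iff] at hA
  rcases hA.2 with h' | h'
  · exact h x y hx hy h'
  · exact (h y x hy hx h').symm

lemma colorable_del (ht : 3 ≤ t) (v : HV t γ) :
    ((Hgraph t γ).induce {w | w ≠ v}).Colorable (t - 1) := by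
  rcases v with i0 | l0 | ⟨l0, k0⟩
  · -- v = a_{i0}
    refine colorable_induce_of _ _ (fun w => match w with
      | Sum.inl i => if (i : ℕ) < (i0 : ℕ) then (⟨(i : ℕ) % 2, by omega⟩ : Fin (t - 1))
          else ⟨((i : ℕ) + 1) % 2, by omega⟩
      | Sum.inr (Sum.inl l) => (⟨((l : ℕ) + 1) % 2, by omega⟩ : Fin (t - 1))
      | Sum.inr (Sum.inr (l, k)) => (⟨(k : ℕ) + 2, by omega⟩ : Fin (t - 1))) ?_
    rintro (i | l | ⟨l, k⟩) (j | l' | ⟨l', k'⟩) hxv hyv hrel <;> dsimp only <;>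
      simp only [HRel] at hrel
    · have hx' : (i : ℕ) ≠ (i0 : ℕ) := by simpa [Fin.ext_iff] using hxv
      have hy' : (j : ℕ) ≠ (i0 : ℕ) := by simpa [Fin.ext_iff] using hyv
      split_ifs <;> simp only [ne_eq, Fin.mk.injEq] <;> omega
    · split_ifs <;> simp only [ne_eq, Fin.mk.injEq] <;> omega
    · have hy' : (j : ℕ) ≠ (i0 : ℕ) := by simpa [Fin.ext_iff] using hyv
      split_ifs <;> simp only [ne_eq, Fin.mk.injEq] <;> omega
    · simp only [ne_eq, Fin.mk.injEq]; omega
    · simp only [ne_eq, Fin.mk.injEq]; omega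
    · have hk : (k : ℕ) ≠ (k' : ℕ) := by
        have := hrel.2; simpa [Fin.ext_iff] using this
      simp only [ne_eq, Fin.mk.injEq]; omega
  · -- v = b_{l0}
    refine colorable_induce_of _ _ (fun w => match w with
      | Sum.inl i => (⟨(i : ℕ) % 2, by omega⟩ : Fin (t - 1))
      | Sum.inr (Sum.inl l) =>
          if (l : ℕ) < (l0 : ℕ) then (⟨((l : ℕ) + 1) % 2, by omega⟩ : Fin (t - 1))
          else ⟨(l : ℕ) % 2, by omega⟩
      | Sum.inr (Sum.inr (l, k)) => (⟨(k : ℕ) + 2, by omega⟩ : Fin (t - 1))) ?_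
    rintro (i | l | ⟨l, k⟩) (j | l' | ⟨l', k'⟩) hxv hyv hrel <;> dsimp only <;>
      simp only [HRel] at hrel
    · simp only [ne_eq, Fin.mk.injEq]; omega
    · simp only [ne_eq, Fin.mk.injEq]; omega
    · have hx' : (l : ℕ) ≠ (l0 : ℕ) := by simpa [Fin.ext_iff] using hxv
      have hl0 : (l0 : ℕ) < γ := l0.isLt
      split_ifs <;> simp only [ne_eq, Fin.mk.injEq] <;> omega
    · have hx' : (l : ℕ) ≠ (l0 : ℕ) := by simpa [Fin.ext_iff] using hxv
      have hy' : (l' : ℕ) ≠ (l0 : ℕ) := by simpa [Fin.ext_iff] using hyv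
      split_ifs <;> simp only [ne_eq, Fin.mk.injEq] <;> omega
    · split_ifs <;> simp only [ne_eq, Fin.mk.injEq] <;> omega
    · have hk : (k : ℕ) ≠ (k' : ℕ) := by
        have := hrel.2; simpa [Fin.ext_iff] using this
      simp only [ne_eq, Fin.mk.injEq]; omega
  · -- v = c_{l0,k0}
    refine colorable_induce_of _ _ (fun w => match w with
      | Sum.inl i => (⟨(i : ℕ) % 2, by omega⟩ : Fin (t - 1))
      | Sum.inr (Sum.inl l) =>
          if (l : ℕ) < (l0 : ℕ) then (⟨((l : ℕ) + 1) % 2, by omega⟩ : Fin (t - 1))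
          else if (l : ℕ) = (l0 : ℕ) then ⟨(k0 : ℕ) + 2, by omega⟩
          else ⟨(l : ℕ) % 2, by omega⟩
      | Sum.inr (Sum.inr (l, k)) => (⟨(k : ℕ) + 2, by omega⟩ : Fin (t - 1))) ?_
    rintro (i | l | ⟨l, k⟩) (j | l' | ⟨l', k'⟩) hxv hyv hrel <;> dsimp only <;>
      simp only [HRel] at hrel
    · simp only [ne_eq, Fin.mk.injEq]; omega
    · simp only [ne_eq, Fin.mk.injEq]; omega
    · have hl0 : (l0 : ℕ) < γ := l0.isLt
      have hk0 : (k0 : ℕ) < t - 3 := k0.isLt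
      split_ifs <;> simp only [ne_eq, Fin.mk.injEq] <;> omega
    · split_ifs <;> simp only [ne_eq, Fin.mk.injEq] <;> omega
    · have hy' : ¬((l' : ℕ) = (l0 : ℕ) ∧ (k' : ℕ) = (k0 : ℕ)) := by
        simpa [Prod.ext_iff, Fin.ext_iff] using hyv
      have hll' : (l : ℕ) = (l' : ℕ) := by simpa [Fin.ext_iff] using hrel
      split_ifs <;> simp only [ne_eq, Fin.mk.injEq] <;> omega
    · have hk : (k : ℕ) ≠ (k' : ℕ) := by
        have := hrel.2; simpa [Fin.ext_iff] using this
      simp only [ne_eq, Fin.mk.injEq]; omega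

/-! ### Lower bound from cliques -/

lemma le_chrom_of_clique (v : HV t γ) {n : ℕ} (f : Fin n → HV t γ)
    (hne : ∀ j, f j ≠ v)
    (hadj : ∀ j j', j ≠ j' → (Hgraph t γ).Adj (f j) (f j')) :
    (n : ℕ∞) ≤ ((Hgraph t γ).induce {w | w ≠ v}).chromaticNumber := by
  have emb : (⊤ : SimpleGraph (Fin n)) ↪g ((Hgraph t γ).induce {w | w ≠ v}) := by
    refine ⟨⟨fun j => ⟨f j, hne j⟩, ?_⟩, ?_⟩
    · intro x y hxy
      by_contra hne'
      exact (hadj x y hne').ne (congrArg Subtype.val hxy)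
    · intro x y
      show (Hgraph t γ).Adj (f x) (f y) ↔ x ≠ y
      constructor
      · intro h e
        subst e
        exact (Hgraph t γ).irrefl h
      · exact hadj x y
  have hle := SimpleGraph.chromaticNumber_mono_of_hom emb.toHom
  rwa [SimpleGraph.chromaticNumber_top, Fintype.card_fin] at hle

/-- the block clique `{a_l, a_{l+1}} ∪ C_l` -/
def blkA (t γ : ℕ) (l : ℕ) (hl : l < γ) : Fin (t - 1) → HV t γ := fun j =>
  if h0 : (j : ℕ) = 0 then Sum.inl ⟨l, by omega⟩
  else if h1 : (j : ℕ) = 1 then Sum.inl ⟨l + 1, by omega⟩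
  else Sum.inr (Sum.inr (⟨l, hl⟩, ⟨(j : ℕ) - 2, by
    have := j.isLt; omega⟩))

lemma blkA_adj {l : ℕ} (hl : l < γ) :
    ∀ j j' : Fin (t - 1), j ≠ j' → (Hgraph t γ).Adj (blkA t γ l hl j) (blkA t γ l hl j') := by
  intro j j' hjj'
  have hvne : (j : ℕ) ≠ (j' : ℕ) := fun e => hjj' (Fin.ext e)
  unfold blkA
  split_ifs <;>
    first
    | omega
    | exact adj_aa _ _ (by omega)
    | exact (adj_aa _ _ (by omega)).symm
    | exact adj_ac _ _ _ (by omega)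
    | exact (adj_ac _ _ _ (by omega)).symm
    | exact adj_cc _ _ _ (by omega)

/-- the clique `{a_e, b_m} ∪ C_m` (for `(m,e) = (0,0)` or `(γ-1,γ)`) -/
def blkB (t γ : ℕ) (m e : ℕ) (hm : m < γ) (he : e < γ + 1) : Fin (t - 1) → HV t γ := fun j =>
  if h0 : (j : ℕ) = 0 then Sum.inl ⟨e, he⟩
  else if h1 : (j : ℕ) = 1 then Sum.inr (Sum.inl ⟨m, hm⟩)
  else Sum.inr (Sum.inr (⟨m, hm⟩, ⟨(j : ℕ) - 2, by
    have := j.isLt; omega⟩))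

lemma blkB_adj {m e : ℕ} (hm : m < γ) (he : e < γ + 1)
    (hba : (m = 0 ∧ e = 0) ∨ (m + 1 = γ ∧ e = γ)) :
    ∀ j j' : Fin (t - 1), j ≠ j' →
      (Hgraph t γ).Adj (blkB t γ m e hm he j) (blkB t γ m e hm he j') := by
  intro j j' hjj'
  have hvne : (j : ℕ) ≠ (j' : ℕ) := fun e => hjj' (Fin.ext e)
  unfold blkB
  split_ifs <;>
    first
    | omega
    | exact (adj_ba _ _ hba).symm
    | exact adj_ba _ _ hba
    | exact adj_ac _ _ _ (by omega)
    | exact (adj_ac _ _ _ (by omega)).symm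
    | exact adj_bc _ _
    | exact (adj_bc _ _).symm
    | exact adj_cc _ _ _ (by omega)

/-- for `γ = 1` and a removed `c`-vertex: the clique `{a_0, a_1, b_0} ∪ (C_0 \ {c_{0,k0}})` -/
def skipF (k0 x : ℕ) : ℕ := if x - 3 < k0 then x - 3 else x - 2

lemma skipF_lt {n k0 x : ℕ} (hx : x < n - 1) (h2 : 2 < x) (hk0 : k0 < n - 3) :
    skipF k0 x < n - 3 := by
  unfold skipF; split_ifs <;> omega

lemma skipF_ne {k0 x y : ℕ} (h2 : 2 < x) (h2' : 2 < y) (hne : x ≠ y) :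
    skipF k0 x ≠ skipF k0 y := by
  unfold skipF; split_ifs <;> omega

lemma skipF_ne_k0 {k0 x : ℕ} (h2 : 2 < x) : skipF k0 x ≠ k0 := by
  unfold skipF; split_ifs <;> omega

def blkS (t γ : ℕ) (hγ : γ = 1) (k0 : ℕ) (hk0 : k0 < t - 3) : Fin (t - 1) → HV t γ := fun j =>
  if h0 : (j : ℕ) = 0 then Sum.inl ⟨0, by omega⟩
  else if h1 : (j : ℕ) = 1 then Sum.inl ⟨1, by omega⟩
  else if h2 : (j : ℕ) = 2 then Sum.inr (Sum.inl ⟨0, by omega⟩)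
  else Sum.inr (Sum.inr (⟨0, by omega⟩,
    ⟨skipF k0 (j : ℕ), skipF_lt j.isLt (by omega) hk0⟩))

lemma blkS_adj (hγ : γ = 1) {k0 : ℕ} (hk0 : k0 < t - 3) :
    ∀ j j' : Fin (t - 1), j ≠ j' →
      (Hgraph t γ).Adj (blkS t γ hγ k0 hk0 j) (blkS t γ hγ k0 hk0 j') := by
  intro j j' hjj'
  have hvne : (j : ℕ) ≠ (j' : ℕ) := fun e => hjj' (Fin.ext e)
  unfold blkS
  split_ifs <;>
    first
    | omega
    | exact adj_aa _ _ (by omega)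
    | exact (adj_aa _ _ (by omega)).symm
    | exact adj_ba _ _ (by omega)
    | exact (adj_ba _ _ (by omega)).symm
    | exact adj_ac _ _ _ (by omega)
    | exact (adj_ac _ _ _ (by omega)).symm
    | exact adj_bc _ _
    | exact (adj_bc _ _).symm
    | exact adj_cc _ _ _ (skipF_ne (by omega) (by omega) (by omega))

lemma clique_del (ht : 3 ≤ t) (hγ : 1 ≤ γ) (v : HV t γ) :
    ((t - 1 : ℕ) : ℕ∞) ≤ ((Hgraph t γ).induce {w | w ≠ v}).chromaticNumber := by
  rcases v with i0 | l0 | ⟨l0, k0⟩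
  · -- v = a_{i0}
    by_cases h0 : (i0 : ℕ) = 0
    · refine le_chrom_of_clique _ (blkB t γ (γ - 1) γ (by omega) (by omega)) ?_
        (blkB_adj _ _ (Or.inr ⟨by omega, rfl⟩))
      intro j
      unfold blkB
      split_ifs <;> simp [Fin.ext_iff] <;> omega
    · refine le_chrom_of_clique _ (blkB t γ 0 0 (by omega) (by omega)) ?_
        (blkB_adj _ _ (Or.inl ⟨rfl, rfl⟩))
      intro j
      unfold blkB
      split_ifs <;> simp [Fin.ext_iff] <;> omega
  · -- v = b_{l0}
    refine le_chrom_of_clique _ (blkA t γ (l0 : ℕ) l0.isLt) ?_ (blkA_adj _)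
    intro j
    unfold blkA
    split_ifs <;> simp
  · -- v = c_{l0,k0}
    by_cases h1 : γ = 1
    · have hl0 : (l0 : ℕ) = 0 := by have := l0.isLt; omega
      refine le_chrom_of_clique _ (blkS t γ h1 (k0 : ℕ) k0.isLt) ?_ (blkS_adj h1 k0.isLt)
      intro j
      unfold blkS
      split_ifs with p0 p1 p2 <;> simp [Prod.ext_iff, Fin.ext_iff]
      intro _
      exact skipF_ne_k0 (by omega)
    · obtain ⟨m, hmγ, hml0⟩ : ∃ m, m < γ ∧ m ≠ (l0 : ℕ) := by
        have := l0.isLt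
        rcases Nat.eq_zero_or_pos (l0 : ℕ) with h | h
        · exact ⟨1, by omega, by omega⟩
        · exact ⟨0, by omega, by omega⟩
      refine le_chrom_of_clique _ (blkA t γ m hmγ) ?_ (blkA_adj _)
      intro j
      unfold blkA
      split_ifs <;> simp [Prod.ext_iff, Fin.ext_iff] <;> omega

end HProof

/-- For all integers `t ≥ 3` and `γ ≥ 1`, the graph `H^t_γ` has exactly
`(t-1)γ + 1` vertices, its chromatic number equals `t`, and removing any vertex yields a
graph of chromatic number `t - 1` (i.e. `H^t_γ` is `t`-critical). -/
theorem stmt_1 (t γ : ℕ) (ht : 3 ≤ t) (hγ : 1 ≤ γ) :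
    Fintype.card (HV t γ) = (t - 1) * γ + 1 ∧
    (Hgraph t γ).chromaticNumber = ((t : ℕ) : ℕ∞) ∧
    ∀ v : HV t γ,
      ((Hgraph t γ).induce {w | w ≠ v}).chromaticNumber = ((t - 1 : ℕ) : ℕ∞) := by
  obtain ⟨s, rfl⟩ : ∃ s, t = s + 3 := ⟨t - 3, by omega⟩
  refine ⟨?_, ?_, ?_⟩
  · simp only [HV, Fintype.card_sum, Fintype.card_prod, Fintype.card_fin]
    have h3 : s + 3 - 3 = s := by omega
    have h1 : s + 3 - 1 = s + 2 := by omega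
    rw [h3, h1]
    ring
  · have hub := (HProof.colorable_t (γ := γ) ht).chromaticNumber_le
    have hnc := HProof.not_colorable (t := s + 3) (γ := γ) ht hγ
    have hlb : ¬ (Hgraph (s + 3) γ).chromaticNumber ≤ ((s + 3 - 1 : ℕ) : ℕ∞) := fun h =>
      hnc (SimpleGraph.chromaticNumber_le_iff_colorable.mp h)
    have hne_top : (Hgraph (s + 3) γ).chromaticNumber ≠ ⊤ :=
      ne_top_of_le_ne_top (WithTop.coe_ne_top) hub
    obtain ⟨n, hn⟩ : ∃ n : ℕ, (Hgraph (s + 3) γ).chromaticNumber = n :=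
      ⟨_, (ENat.coe_toNat hne_top).symm⟩
    rw [hn] at hub hlb ⊢
    rw [Nat.cast_le] at hub
    rw [Nat.cast_le] at hlb
    exact_mod_cast congrArg (Nat.cast : ℕ → ℕ∞) (by omega : n = s + 3)
  · intro v
    have hub := (HProof.colorable_del (γ := γ) ht v).chromaticNumber_le
    have hlb := HProof.clique_del ht hγ v
    exact le_antisymm hub hlb
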